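/- For every k with 1 ≤ k ≤ n, the subspace g₂(P₁)_{e₁…e_k} := { A ∈ g₂(P₁) : A(e_j, X) = 0 for all X ∈ V and all 1 ≤ j ≤ k } has dimension (n−k)(n−k+1)/2 + (n−k)(n−1) + (n−2)(n−1)/2, where g₂(P₁) is the space of symmetric bilinear forms A on V with A(X, C) = 0 and A(S, J X) = A(X, C) for all X ∈ V, and e_j := h_j for 1 ≤ j ≤ n−1 while e_n := S + v_1 + ⋯ + v_n. -/

import Mathlib

set_option synthInstance.maxHeartbeats 1000000
set_option maxHeartbeats 1000000

noncomputable section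

/-- The pointwise model `V = (Fin n → ℝ) × (Fin n → ℝ)` of the double tangent space
`T_x(TM)` for a spray on an `n`-dimensional manifold, in an adapted basis. -/
abbrev V (n : ℕ) : Type := (Fin n → ℝ) × (Fin n → ℝ)

/-- The vertical endomorphism `J (x, y) = (0, x)`. -/
def Jmap (n : ℕ) : V n →ₗ[ℝ] V n where
  toFun p := (0, p.1)
  map_add' a b := by simp
  map_smul' c a := by simp

/-- The horizontal projector `P_h (x, y) = (x, 0)`. -/
def Ph (n : ℕ) : V n →ₗ[ℝ] V n where
  toFun p := (p.1, 0)
  map_add' a b := by simp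
  map_smul' c a := by simp

/-- The `j`-th standard basis vector of `Fin n → ℝ`, indexed by `1 ≤ j ≤ n`
(zero if `j` is out of range). -/
def dlt (n j : ℕ) : Fin n → ℝ := fun i => if (i : ℕ) + 1 = j then 1 else 0

/-- The horizontal basis vector `h_j`, `1 ≤ j ≤ n`. -/
def hvec (n j : ℕ) : V n := (dlt n j, 0)

/-- The vertical basis vector `v_j`, `1 ≤ j ≤ n`. -/
def vvec (n j : ℕ) : V n := (0, dlt n j)

/-- The spray vector `S = h_n`. -/
def Svec (n : ℕ) : V n := hvec n n

/-- The Liouville vector `C = v_n = J S`. -/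
def Cvec (n : ℕ) : V n := vvec n n

/-- Bilinear forms on `V n`. -/
abbrev Bil (n : ℕ) := V n →ₗ[ℝ] V n →ₗ[ℝ] ℝ

/-- Trilinear forms on `V n` (bundled). -/
abbrev Tri (n : ℕ) := V n →ₗ[ℝ] V n →ₗ[ℝ] V n →ₗ[ℝ] ℝ

/-- The basis vectors `e_1, …, e_{2n}` (1-indexed): `e_j = h_j` for `j < n`,
`e_n = S + v_1 + ⋯ + v_n`, and `e_{n+j} = v_j`. -/
def evec (n j : ℕ) : V n :=
  if j < n then hvec n j
  else if j = n then Svec n + ∑ i ∈ Finset.Icc 1 n, vvec n i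
  else vvec n (j - n)

/-- The subspace `g₂(P₁)_{e₁…e_k}` of `g₂(P₁)` of forms annihilating `e_1, …, e_k`
in the first argument. -/
def g2P1e (n k : ℕ) : Submodule ℝ (Bil n) where
  carrier := {A | (∀ X Y, A X Y = A Y X) ∧ (∀ X, A X (Cvec n) = 0) ∧
    (∀ X, A (Svec n) (Jmap n X) = A X (Cvec n)) ∧
    (∀ j, 1 ≤ j → j ≤ k → ∀ X, A (evec n j) X = 0)}
  add_mem' := by
    rintro a b ⟨ha1, ha2, ha3, ha4⟩ ⟨hb1, hb2, hb3, hb4⟩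
    refine ⟨fun X Y => ?_, fun X => ?_, fun X => ?_, fun j hj1 hj2 X => ?_⟩ <;>
      simp only [LinearMap.add_apply]
    · linear_combination ha1 X Y + hb1 X Y
    · linear_combination ha2 X + hb2 X
    · linear_combination ha3 X + hb3 X
    · linear_combination ha4 j hj1 hj2 X + hb4 j hj1 hj2 X
  zero_mem' := ⟨fun X Y => by simp, fun X => by simp, fun X => by simp,
    fun j hj1 hj2 X => by simp⟩
  smul_mem' := by
    rintro c a ⟨ha1, ha2, ha3, ha4⟩
    refine ⟨fun X Y => ?_, fun X => ?_, fun X => ?_, fun j hj1 hj2 X => ?_⟩ <;>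
      simp only [LinearMap.smul_apply, smul_eq_mul]
    · linear_combination c * ha1 X Y
    · linear_combination c * ha2 X
    · linear_combination c * ha3 X
    · linear_combination c * ha4 j hj1 hj2 X


open Sum Finset


noncomputable def bV (n : ℕ) : Module.Basis (Fin n ⊕ Fin n) ℝ (V n) :=
  (Pi.basisFun ℝ (Fin n)).prod (Pi.basisFun ℝ (Fin n))

abbrev Idx (n : ℕ) := (Fin n ⊕ Fin n) × (Fin n ⊕ Fin n)

def Free (n k : ℕ) : Idx n → Prop
  | (inl i, inl j) => k ≤ (i : ℕ) ∧ i ≤ j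
  | (inl i, inr j) => k ≤ (i : ℕ) ∧ (i : ℕ) < n - 1 ∧ (j : ℕ) < n - 1
  | (inr _, inl _) => False
  | (inr i, inr j) => i ≤ j ∧ (j : ℕ) < n - 1 ∧ ((i : ℕ) = (j : ℕ) → k < n)

instance (n k : ℕ) : DecidablePred (Free n k) := fun pq => by
  rcases pq with ⟨i | i, j | j⟩ <;> simp only [Free] <;> infer_instance

abbrev FT (n k : ℕ) := {pq : Idx n // Free n k pq}

def gval (n k : ℕ) (f : FT n k → ℝ) (pq : Idx n) : ℝ :=
  if h : Free n k pq then f ⟨pq, h⟩ else 0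

def mat (n k : ℕ) (f : FT n k → ℝ) : (Fin n ⊕ Fin n) → (Fin n ⊕ Fin n) → ℝ
  | inl i, inl j => gval n k f (inl (min i j), inl (max i j))
  | inl i, inr j => gval n k f (inl i, inr j)
  | inr i, inl j => gval n k f (inl j, inr i)
  | inr i, inr j =>
      if (i : ℕ) = (j : ℕ) ∧ n ≤ k then
        -∑ c : Fin n, (if c = i then 0 else gval n k f (inr (min i c), inr (max i c)))
      else gval n k f (inr (min i j), inr (max i j))

theorem gval_add (n k : ℕ) (f g : FT n k → ℝ) (pq : Idx n) :
    gval n k (f + g) pq = gval n k f pq + gval n k g pq := by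
  unfold gval; split <;> simp

theorem gval_smul (n k : ℕ) (c : ℝ) (f : FT n k → ℝ) (pq : Idx n) :
    gval n k (c • f) pq = c * gval n k f pq := by
  unfold gval; split <;> simp

theorem mat_add (n k : ℕ) (f g : FT n k → ℝ) (p q : Fin n ⊕ Fin n) :
    mat n k (f + g) p q = mat n k f p q + mat n k g p q := by
  rcases p with i | i <;> rcases q with j | j <;> simp only [mat, gval_add]
  split
  · rw [← neg_add, ← Finset.sum_add_distrib]
    congr 1; apply Finset.sum_congr rfl; intro c _
    split <;> simp
  · rfl

theorem mat_smul (n k : ℕ) (c : ℝ) (f : FT n k → ℝ) (p q : Fin n ⊕ Fin n) :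
    mat n k (c • f) p q = c * mat n k f p q := by
  rcases p with i | i <;> rcases q with j | j <;> simp only [mat, gval_smul]
  split
  · rw [mul_neg, Finset.mul_sum]
    congr 1; apply Finset.sum_congr rfl; intro d _
    split <;> simp
  · rfl

noncomputable def Ebil (n : ℕ) (p q : Fin n ⊕ Fin n) : Bil n :=
  ((bV n).coord p).smulRight ((bV n).coord q)

theorem Ebil_apply (n : ℕ) (p q p' q' : Fin n ⊕ Fin n) :
    Ebil n p q (bV n p') (bV n q') =
      (if p' = p then (1:ℝ) else 0) * (if q' = q then 1 else 0) := by
  simp only [Ebil, LinearMap.smulRight_apply, LinearMap.smul_apply, smul_eq_mul,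
    Module.Basis.coord_apply, Module.Basis.repr_self, Finsupp.single_apply]

noncomputable def psi (n k : ℕ) : (FT n k → ℝ) →ₗ[ℝ] Bil n where
  toFun f := ∑ p : Fin n ⊕ Fin n, ∑ q : Fin n ⊕ Fin n, mat n k f p q • Ebil n p q
  map_add' f g := by
    rw [← Finset.sum_add_distrib]
    apply Finset.sum_congr rfl; intro p _
    rw [← Finset.sum_add_distrib]
    apply Finset.sum_congr rfl; intro q _
    rw [mat_add, add_smul]
  map_smul' c f := by
    simp only [RingHom.id_apply, Finset.smul_sum]
    apply Finset.sum_congr rfl; intro p _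
    apply Finset.sum_congr rfl; intro q _
    rw [mat_smul, mul_smul]

theorem psi_apply_basis (n k : ℕ) (f : FT n k → ℝ) (p q : Fin n ⊕ Fin n) :
    psi n k f (bV n p) (bV n q) = mat n k f p q := by
  simp only [psi, LinearMap.coe_mk, AddHom.coe_mk, LinearMap.coe_sum, Finset.sum_apply,
    LinearMap.smul_apply, smul_eq_mul, Ebil_apply]
  rw [Finset.sum_eq_single p]
  · rw [Finset.sum_eq_single q]
    · simp
    · intro b _ hb; simp [Ne.symm hb]
    · simp
  · intro b _ hb
    rw [Finset.sum_eq_zero]; intro c _; simp [Ne.symm hb]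
  · simp

theorem hvec_eq (n : ℕ) (i : Fin n) : hvec n ((i : ℕ) + 1) = bV n (inl i) := by
  simp only [bV, Module.Basis.prod_apply, Pi.basisFun_apply, hvec]
  ext j <;> simp [dlt, Pi.single_apply, Fin.val_inj, eq_comm]

theorem vvec_eq (n : ℕ) (i : Fin n) : vvec n ((i : ℕ) + 1) = bV n (inr i) := by
  simp only [bV, Module.Basis.prod_apply, Pi.basisFun_apply, vvec]
  ext j <;> simp [dlt, Pi.single_apply, Fin.val_inj, eq_comm]

theorem hvec_eq' (n j : ℕ) (i : Fin n) (h : j = (i : ℕ) + 1) : hvec n j = bV n (inl i) :=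
  h ▸ hvec_eq n i

theorem vvec_eq' (n j : ℕ) (i : Fin n) (h : j = (i : ℕ) + 1) : vvec n j = bV n (inr i) :=
  h ▸ vvec_eq n i

theorem Svec_eq (n : ℕ) (hn : 0 < n) : Svec n = bV n (inl ⟨n - 1, by omega⟩) :=
  hvec_eq' n n _ (by simp; omega)

theorem Cvec_eq (n : ℕ) (hn : 0 < n) : Cvec n = bV n (inr ⟨n - 1, by omega⟩) :=
  vvec_eq' n n _ (by simp; omega)

theorem Jmap_inl (n : ℕ) (i : Fin n) : Jmap n (bV n (inl i)) = bV n (inr i) := by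
  rw [← hvec_eq, ← vvec_eq]; rfl

theorem Jmap_inr (n : ℕ) (i : Fin n) : Jmap n (bV n (inr i)) = 0 := by
  rw [← vvec_eq]; rfl

theorem evec_lt (n j : ℕ) (h1 : 1 ≤ j) (h2 : j < n) :
    evec n j = bV n (inl ⟨j - 1, by omega⟩) := by
  rw [evec, if_pos h2]; exact hvec_eq' n j _ (by simp; omega)

theorem evec_n (n : ℕ) (hn : 0 < n) :
    evec n n = bV n (inl ⟨n - 1, by omega⟩) + ∑ c : Fin n, bV n (inr c) := by
  rw [evec, if_neg (lt_irrefl n), if_pos rfl, ← Svec_eq n hn]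
  congr 1
  rw [show Finset.Icc 1 n = Finset.Ico 1 (n + 1) by rfl, Finset.sum_Ico_eq_sum_range,
    ← Fin.sum_univ_eq_sum_range (fun i => vvec n (1 + i)) (n + 1 - 1)]
  apply Finset.sum_congr rfl
  intro c _
  rw [add_comm, vvec_eq]

theorem gval_vvlast (n k : ℕ) (f : FT n k → ℝ) (p : Fin n ⊕ Fin n) (b : Fin n)
    (hb : (b : ℕ) = n - 1) : gval n k f (p, inr b) = 0 := by
  apply dif_neg; rcases p with a | a <;> simp [Free] <;> omega

theorem gval_hv_lasth (n k : ℕ) (f : FT n k → ℝ) (a j : Fin n)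
    (ha : (a : ℕ) = n - 1) : gval n k f (inl a, inr j) = 0 := by
  apply dif_neg; simp [Free]; omega

theorem gval_row_small (n k : ℕ) (f : FT n k → ℝ) (a : Fin n) (q : Fin n ⊕ Fin n)
    (ha : (a : ℕ) < k) : gval n k f (inl a, q) = 0 := by
  apply dif_neg; rcases q with b | b <;> simp [Free] <;> omega

theorem mat_symm (n k : ℕ) (f : FT n k → ℝ) (p q : Fin n ⊕ Fin n) :
    mat n k f p q = mat n k f q p := by
  rcases p with i | i <;> rcases q with j | j <;> simp only [mat]
  · rw [min_comm, max_comm]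
  · by_cases hij : (i : ℕ) = (j : ℕ)
    · have : i = j := Fin.val_injective hij
      subst this; rfl
    · rw [if_neg (by tauto), if_neg (by exact fun h => hij (h.1.symm)), min_comm, max_comm]

theorem mat_lastcol (n k : ℕ) (hn : 0 < n) (f : FT n k → ℝ) (p : Fin n ⊕ Fin n) :
    mat n k f p (inr ⟨n - 1, by omega⟩) = 0 := by
  rcases p with i | i <;> simp only [mat]
  · exact gval_vvlast n k f _ _ rfl
  · split
    · rename_i hik
      rw [neg_eq_zero]
      apply Finset.sum_eq_zero; intro c _
      split
      · rfl
      · apply gval_vvlast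
        show max (i : ℕ) (c : ℕ) = n - 1
        have h1 := hik.1
        have h2 := c.isLt
        omega
    · apply gval_vvlast
      show max (i : ℕ) (n - 1) = n - 1
      have := i.isLt
      omega

theorem mat_Srow (n k : ℕ) (hn : 0 < n) (f : FT n k → ℝ) (j : Fin n) :
    mat n k f (inl ⟨n - 1, by omega⟩) (inr j) = 0 :=
  gval_hv_lasth n k f _ j rfl

theorem mat_row_small (n k : ℕ) (f : FT n k → ℝ) (a : Fin n) (q : Fin n ⊕ Fin n)
    (ha : (a : ℕ) < k) : mat n k f (inl a) q = 0 := by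
  rcases q with j | j <;> simp only [mat]
  · apply gval_row_small
    show min (a : ℕ) (j : ℕ) < k
    omega
  · exact gval_row_small n k f a _ ha

theorem mat_en (n k : ℕ) (hn : 0 < n) (hk : n ≤ k) (f : FT n k → ℝ) (q : Fin n ⊕ Fin n) :
    mat n k f (inl ⟨n - 1, by omega⟩) q + ∑ c : Fin n, mat n k f (inr c) q = 0 := by
  have hrow : mat n k f (inl ⟨n - 1, by omega⟩) q = 0 := by
    apply mat_row_small
    show n - 1 < k
    omega
  rw [hrow, zero_add]
  rcases q with j | j
  · apply Finset.sum_eq_zero; intro c _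
    simp only [mat]
    apply gval_row_small
    exact lt_of_lt_of_le j.isLt hk
  · rw [← Finset.add_sum_erase Finset.univ _ (Finset.mem_univ j)]
    have hdiag : mat n k f (inr j) (inr j) =
        -∑ c : Fin n, (if c = j then 0 else gval n k f (inr (min j c), inr (max j c))) := by
      simp only [mat]
      rw [if_pos (show True ∧ n ≤ k from ⟨trivial, hk⟩)]
    have hsum : ∑ c : Fin n, (if c = j then 0 else gval n k f (inr (min j c), inr (max j c)))
        = ∑ c ∈ Finset.univ.erase j, mat n k f (inr c) (inr j) := by
      rw [← Finset.sum_erase (f := fun c => if c = j then (0:ℝ)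
        else gval n k f (inr (min j c), inr (max j c))) (a := j) Finset.univ (by simp)]
      apply Finset.sum_congr rfl
      intro c hc
      have hcj : c ≠ j := (Finset.mem_erase.mp hc).1
      rw [if_neg hcj]
      simp only [mat]
      rw [if_neg (by exact fun h => hcj (Fin.val_injective h.1)), min_comm, max_comm]
    rw [hdiag, hsum, neg_add_cancel]

theorem mat_free (n k : ℕ) (f : FT n k → ℝ) (pq : Idx n) (h : Free n k pq) :
    mat n k f pq.1 pq.2 = f ⟨pq, h⟩ := by
  obtain ⟨p, q⟩ := pq
  rcases p with i | i <;> rcases q with j | j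
  · obtain ⟨h1, h2⟩ := h
    simp only [mat]
    rw [min_eq_left h2, max_eq_right h2]
    exact dif_pos _
  · exact dif_pos _
  · exact absurd h (by simp [Free])
  · obtain ⟨h1, h2, h3⟩ := h
    simp only [mat]
    rw [if_neg (fun hc => absurd (h3 hc.1) (not_lt.mpr hc.2)), min_eq_left h1, max_eq_right h1]
    exact dif_pos _

theorem psi_mem (n k : ℕ) (hn : 0 < n) (hk2 : k ≤ n) (f : FT n k → ℝ) :
    psi n k f ∈ g2P1e n k := by
  have hC : ∀ X, psi n k f X (Cvec n) = 0 := by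
    have h0 : (psi n k f).flip (Cvec n) = 0 := by
      rw [Cvec_eq n hn]
      refine (bV n).ext fun p => ?_
      simp only [LinearMap.flip_apply, LinearMap.zero_apply]
      rw [psi_apply_basis]
      exact mat_lastcol n k hn f p
    intro X
    exact LinearMap.congr_fun h0 X
  refine ⟨?_, hC, ?_, ?_⟩
  · -- symmetry
    have h0 : psi n k f = (psi n k f).flip := by
      refine LinearMap.ext_basis (bV n) (bV n) fun p q => ?_
      rw [LinearMap.flip_apply, psi_apply_basis, psi_apply_basis, mat_symm]
    intro X Y
    conv_lhs => rw [h0]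
    rw [LinearMap.flip_apply]
  · -- spray condition
    intro X
    rw [hC X]
    have h0 : (psi n k f (Svec n)).comp (Jmap n) = 0 := by
      refine (bV n).ext fun p => ?_
      simp only [LinearMap.comp_apply, LinearMap.zero_apply]
      rcases p with i | i
      · rw [Jmap_inl, Svec_eq n hn, psi_apply_basis]
        exact mat_Srow n k hn f i
      · rw [Jmap_inr]
        exact map_zero _
    exact LinearMap.congr_fun h0 X
  · -- evec conditions
    intro j hj1 hj2 X
    by_cases hjn : j < n
    · have h0 : psi n k f (evec n j) = 0 := by
        rw [evec_lt n j hj1 hjn]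
        refine (bV n).ext fun q => ?_
        rw [psi_apply_basis]
        apply mat_row_small
        show j - 1 < k
        omega
      rw [h0]; rfl
    · have hjk : j = n ∧ n ≤ k := by omega
      have h0 : psi n k f (evec n j) = 0 := by
        rw [hjk.1, evec_n n hn, map_add, map_sum]
        refine (bV n).ext fun q => ?_
        simp only [LinearMap.add_apply, LinearMap.coe_sum, Finset.sum_apply,
          LinearMap.zero_apply]
        rw [psi_apply_basis, Finset.sum_congr rfl fun c _ => psi_apply_basis n k f (inr c) q]
        exact mat_en n k hn hjk.2 f q
      rw [h0]; rfl

noncomputable def phi (n k : ℕ) : Bil n →ₗ[ℝ] (FT n k → ℝ) where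
  toFun A := fun t => A (bV n t.1.1) (bV n t.1.2)
  map_add' A B := by funext t; simp
  map_smul' c A := by funext t; simp

theorem phi_psi (n k : ℕ) (f : FT n k → ℝ) : phi n k (psi n k f) = f := by
  funext t
  show psi n k f (bV n t.1.1) (bV n t.1.2) = f t
  rw [psi_apply_basis, mat_free n k f t.1 t.2]

theorem psi_phi (n k : ℕ) (hn : 0 < n) (hk2 : k ≤ n) (A : Bil n) (hA : A ∈ g2P1e n k) :
    psi n k (phi n k A) = A := by
  obtain ⟨hs, hc, hsj, he⟩ := hA
  set lastI : Fin n := ⟨n - 1, by omega⟩ with hlastI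
  have hsymm : ∀ p q, A (bV n p) (bV n q) = A (bV n q) (bV n p) := fun p q => hs _ _
  have hcol : ∀ p, A (bV n p) (bV n (inr lastI)) = 0 := fun p => by
    have h := hc (bV n p)
    rwa [Cvec_eq n hn] at h
  have hSrow : ∀ j, A (bV n (inl lastI)) (bV n (inr j)) = 0 := fun j => by
    rw [← Svec_eq n hn, ← Jmap_inl, hsj]
    exact hc _
  have hrow : ∀ i : Fin n, (i : ℕ) < k → (i : ℕ) < n - 1 → ∀ q,
      A (bV n (inl i)) (bV n q) = 0 := by
    intro i h1 h2 q
    have e : (⟨(i : ℕ) + 1 - 1, by omega⟩ : Fin n) = i := Fin.ext (by simp)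
    have := he ((i : ℕ) + 1) (by omega) (by omega) (bV n q)
    rwa [evec_lt n ((i : ℕ) + 1) (by omega) (by omega), e] at this
  have hen : n ≤ k → ∀ q, A (bV n (inl lastI)) (bV n q)
      + ∑ c : Fin n, A (bV n (inr c)) (bV n q) = 0 := by
    intro hk q
    have := he n (by omega) hk (bV n q)
    rw [evec_n n hn, map_add, map_sum] at this
    simpa using this
  have hlastrow : n ≤ k → ∀ q, A (bV n (inl lastI)) (bV n q) = 0 := by
    intro hk q
    rcases q with j | j
    · by_cases hj : (j : ℕ) < n - 1
      · rw [hsymm]; exact hrow j (by omega) hj _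
      · have : j = lastI := Fin.ext (by have := j.isLt; simp [hlastI]; omega)
        subst this
        have hz : ∀ c : Fin n, A (bV n (inr c)) (bV n (inl lastI)) = 0 := fun c => by
          rw [hsymm]; exact hSrow c
        have h0 := hen hk (inl lastI)
        rw [Finset.sum_congr rfl fun c _ => hz c, Finset.sum_const_zero, add_zero] at h0
        exact h0
    · exact hSrow j
  have hvsum : n ≤ k → ∀ i, ∑ c : Fin n, A (bV n (inr c)) (bV n (inr i)) = 0 := by
    intro hk i
    have h0 := hen hk (inr i)
    rwa [hSrow i, zero_add] at h0
  have key_hh : ∀ i j : Fin n, i ≤ j →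
      gval n k (phi n k A) (inl i, inl j) = A (bV n (inl i)) (bV n (inl j)) := by
    intro i j hij
    by_cases hk : k ≤ (i : ℕ)
    · exact dif_pos ⟨hk, hij⟩
    · rw [gval_row_small n k _ i _ (by omega)]
      by_cases hi : (i : ℕ) < n - 1
      · exact (hrow i (by omega) hi _).symm
      · have hin : (i : ℕ) = n - 1 := by have := i.isLt; omega
        have hiL : i = lastI := Fin.ext (by simp [hlastI, hin])
        have hkn : n ≤ k := by omega
        rw [hiL]
        exact (hlastrow hkn _).symm
  have key_hv : ∀ i j : Fin n,
      gval n k (phi n k A) (inl i, inr j) = A (bV n (inl i)) (bV n (inr j)) := by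
    intro i j
    by_cases hfree : Free n k (inl i, inr j)
    · exact dif_pos hfree
    · unfold gval
      rw [dif_neg hfree]
      simp only [Free, not_and_or, not_lt] at hfree
      by_cases hj : (j : ℕ) < n - 1
      · by_cases hi : (i : ℕ) < n - 1
        · have hik : (i : ℕ) < k := by omega
          exact (hrow i hik hi _).symm
        · have hiL : i = lastI := Fin.ext (by have := i.isLt; simp [hlastI]; omega)
          rw [hiL]; exact (hSrow j).symm
      · have hjL : j = lastI := Fin.ext (by have := j.isLt; simp [hlastI]; omega)
        rw [hjL]; exact (hcol _).symm
  have key_vv : ∀ i j : Fin n, i ≤ j → ¬((i : ℕ) = (j : ℕ) ∧ n ≤ k) →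
      gval n k (phi n k A) (inr i, inr j) = A (bV n (inr i)) (bV n (inr j)) := by
    intro i j hij hnd
    by_cases hfree : Free n k (inr i, inr j)
    · exact dif_pos hfree
    · unfold gval
      rw [dif_neg hfree]
      simp only [Free, not_and_or, not_lt] at hfree
      have hjL : j = lastI := by
        rcases hfree with h | h | h
        · exact absurd hij h
        · exact Fin.ext (by have := j.isLt; simp [hlastI]; omega)
        · exact absurd (by push_neg at h; exact ⟨h.1, h.2⟩) hnd
      rw [hjL]; exact (hcol _).symm
  refine LinearMap.ext_basis (bV n) (bV n) fun p q => ?_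
  rw [psi_apply_basis]
  rcases p with i | i <;> rcases q with j | j
  · simp only [mat]
    rcases le_total i j with hij | hij
    · rw [min_eq_left hij, max_eq_right hij]
      exact key_hh i j hij
    · rw [min_eq_right hij, max_eq_left hij, key_hh j i hij]
      exact hsymm _ _
  · simp only [mat]
    exact key_hv i j
  · simp only [mat]
    rw [key_hv j i]
    exact hsymm _ _
  · simp only [mat]
    split
    · rename_i hd
      have hij : i = j := Fin.val_injective hd.1
      subst hij
      have hkn : n ≤ k := hd.2
      have hcong : ∀ c : Fin n, (if c = i then (0:ℝ)
          else gval n k (phi n k A) (inr (min i c), inr (max i c)))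
          = (if c = i then 0 else A (bV n (inr i)) (bV n (inr c))) := by
        intro c
        by_cases hci : c = i
        · rw [if_pos hci, if_pos hci]
        · rw [if_neg hci, if_neg hci]
          rcases le_total i c with hle | hle
          · rw [min_eq_left hle, max_eq_right hle]
            exact key_vv i c hle (fun hcc => hci (Fin.val_injective hcc.1.symm))
          · rw [min_eq_right hle, max_eq_left hle,
              key_vv c i hle (fun hcc => hci (Fin.val_injective hcc.1))]
            exact hsymm _ _
      rw [Finset.sum_congr rfl fun c _ => hcong c]
      rw [← Finset.sum_erase (f := fun c => if c = i then (0:ℝ)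
          else A (bV n (inr i)) (bV n (inr c))) (a := i) Finset.univ (by simp),
        Finset.sum_congr rfl (fun c hc => if_neg (Finset.mem_erase.mp hc).1),
        Finset.sum_erase_eq_sub (Finset.mem_univ i),
        Finset.sum_congr rfl (fun c _ => hsymm (inr i) (inr c)), hvsum hkn i]
      ring
    · rename_i hd
      rcases le_total i j with hij | hij
      · rw [min_eq_left hij, max_eq_right hij]
        exact key_vv i j hij hd
      · rw [min_eq_right hij, max_eq_left hij,
          key_vv j i hij (fun hcc => hd ⟨hcc.1.symm, hcc.2⟩)]
        exact hsymm _ _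

noncomputable def equivFT (n k : ℕ) (hn : 0 < n) (hk2 : k ≤ n) :
    g2P1e n k ≃ₗ[ℝ] (FT n k → ℝ) where
  toFun A := phi n k A.1
  map_add' A B := by ext t; simp [phi]
  map_smul' c A := by ext t; simp [phi]
  invFun f := ⟨psi n k f, psi_mem n k hn hk2 f⟩
  left_inv A := Subtype.ext (psi_phi n k hn hk2 A.1 A.2)
  right_inv f := phi_psi n k f

theorem finrank_eq_card (n k : ℕ) (hn : 0 < n) (hk2 : k ≤ n) :
    Module.finrank ℝ (g2P1e n k) = Fintype.card (FT n k) := by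
  rw [(equivFT n k hn hk2).finrank_eq, Module.finrank_fintype_fun_eq_card]

theorem inner_le (n i : ℕ) : (∑ j ∈ Finset.range n, if i ≤ j then (1:ℕ) else 0) = n - i := by
  rw [← Finset.card_filter]
  have : (Finset.range n).filter (fun j => i ≤ j) = Finset.Ico i n := by
    ext a; simp [Finset.mem_filter, Finset.mem_range, Finset.mem_Ico]; omega
  rw [this, Nat.card_Ico]

theorem gauss_desc (m : ℕ) : (∑ i ∈ Finset.range m, (m - i)) = m * (m - 1) / 2 + m := by
  induction m with
  | zero => simp
  | succ s ih =>
    rw [Finset.sum_range_succ]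
    have h1 : ∑ i ∈ Finset.range s, (s + 1 - i) = (∑ i ∈ Finset.range s, (s - i)) + s := by
      rw [Finset.sum_congr rfl (fun i hi => by
        have := Finset.mem_range.mp hi
        omega : ∀ i ∈ Finset.range s, s + 1 - i = (s - i) + 1), Finset.sum_add_distrib]
      simp
    rw [h1, ih]
    have hpar : s * (s - 1) % 2 = 0 := by
      cases s with
      | zero => rfl
      | succ u =>
        have h : Even ((u + 1) * u) := by rw [mul_comm]; exact Nat.even_mul_succ_self u
        rw [Nat.add_sub_cancel]
        exact Nat.even_iff.mp h
    have hstep : (s + 1) * (s + 1 - 1) = s * (s - 1) + 2 * s := by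
      cases s with
      | zero => rfl
      | succ u =>
        rw [Nat.add_sub_cancel, Nat.add_sub_cancel]
        ring
    omega

theorem count_hh (n k : ℕ) :
    (∑ i ∈ Finset.range n, ∑ j ∈ Finset.range n, if k ≤ i ∧ i ≤ j then (1:ℕ) else 0)
      = (n - k) * (n - k - 1) / 2 + (n - k) := by
  have h1 : ∀ i ∈ Finset.range n, (∑ j ∈ Finset.range n, if k ≤ i ∧ i ≤ j then (1:ℕ) else 0)
      = if k ≤ i then n - i else 0 := by
    intro i _
    by_cases hki : k ≤ i
    · simp only [hki, true_and, if_true]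
      exact inner_le n i
    · simp [hki]
  rw [Finset.sum_congr rfl h1, ← Finset.sum_filter]
  have h2 : (Finset.range n).filter (fun i => k ≤ i) = Finset.Ico k n := by
    ext a; simp [Finset.mem_filter, Finset.mem_range, Finset.mem_Ico]; omega
  rw [h2, Finset.sum_Ico_eq_sum_range,
    Finset.sum_congr rfl (fun i hi => by
      have := Finset.mem_range.mp hi
      omega : ∀ i ∈ Finset.range (n - k), n - (k + i) = (n - k) - i),
    gauss_desc]

theorem count_hv (n k : ℕ) :
    (∑ i ∈ Finset.range n, ∑ j ∈ Finset.range n,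
        if k ≤ i ∧ i < n - 1 ∧ j < n - 1 then (1:ℕ) else 0)
      = ((n - 1) - k) * (n - 1) := by
  have hfil : (Finset.range n).filter (fun j => j < n - 1) = Finset.range (n - 1) := by
    ext a; simp [Finset.mem_filter, Finset.mem_range]; omega
  have h1 : ∀ i ∈ Finset.range n, (∑ j ∈ Finset.range n,
      if k ≤ i ∧ i < n - 1 ∧ j < n - 1 then (1:ℕ) else 0)
      = if k ≤ i ∧ i < n - 1 then n - 1 else 0 := by
    intro i _
    by_cases hki : k ≤ i ∧ i < n - 1
    · simp only [hki.1, hki.2, true_and, if_true]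
      rw [← Finset.card_filter, hfil, Finset.card_range]
    · rw [if_neg hki]
      apply Finset.sum_eq_zero
      intro j _
      rw [if_neg (fun h => hki ⟨h.1, h.2.1⟩)]
  rw [Finset.sum_congr rfl h1, ← Finset.sum_filter]
  have h2 : (Finset.range n).filter (fun i => k ≤ i ∧ i < n - 1) = Finset.Ico k (n - 1) := by
    ext a; simp [Finset.mem_filter, Finset.mem_range, Finset.mem_Ico]; omega
  rw [h2, Finset.sum_const, Nat.card_Ico, smul_eq_mul]

theorem count_vv (n k : ℕ) :
    (∑ i ∈ Finset.range n, ∑ j ∈ Finset.range n,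
        if i ≤ j ∧ j < n - 1 ∧ (i = j → k < n) then (1:ℕ) else 0)
      = (n - 1) * (n - 1 - 1) / 2 + (if k < n then n - 1 else 0) := by
  rw [Finset.sum_comm]
  have h1 : ∀ j ∈ Finset.range n, (∑ i ∈ Finset.range n,
      if i ≤ j ∧ j < n - 1 ∧ (i = j → k < n) then (1:ℕ) else 0)
      = if j < n - 1 then (if k < n then j + 1 else j) else 0 := by
    intro j hj
    have hjn := Finset.mem_range.mp hj
    by_cases hjn1 : j < n - 1
    · rw [if_pos hjn1]
      by_cases hkn : k < n
      · rw [if_pos hkn, ← Finset.card_filter]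
        have : (Finset.range n).filter
            (fun i => i ≤ j ∧ j < n - 1 ∧ (i = j → k < n)) = Finset.range (j + 1) := by
          ext a; simp [Finset.mem_filter, Finset.mem_range]; omega
        rw [this, Finset.card_range]
      · rw [if_neg hkn, ← Finset.card_filter]
        have : (Finset.range n).filter
            (fun i => i ≤ j ∧ j < n - 1 ∧ (i = j → k < n)) = Finset.range j := by
          ext a
          simp only [Finset.mem_filter, Finset.mem_range]
          constructor
          · rintro ⟨ha, hab, -, hc⟩
            rcases Nat.lt_or_ge a j with h | h
            · exact h
            · exact absurd (hc (by omega)) hkn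
          · intro ha
            exact ⟨by omega, by omega, hjn1, fun h => by omega⟩
        rw [this, Finset.card_range]
    · rw [if_neg hjn1]
      apply Finset.sum_eq_zero
      intro i _
      rw [if_neg (fun h => hjn1 h.2.1)]
  rw [Finset.sum_congr rfl h1, ← Finset.sum_filter]
  have h2 : (Finset.range n).filter (fun j => j < n - 1) = Finset.range (n - 1) := by
    ext a; simp [Finset.mem_filter, Finset.mem_range]; omega
  rw [h2]
  by_cases hkn : k < n
  · simp only [hkn, if_true]
    rw [Finset.sum_congr rfl (fun j _ => rfl),
      show (∑ j ∈ Finset.range (n - 1), (j + 1)) = (∑ j ∈ Finset.range (n - 1), j) + (n - 1) by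
        rw [Finset.sum_add_distrib]; simp,
      Finset.sum_range_id]
  · simp only [hkn, if_false]
    rw [Finset.sum_range_id, Nat.add_zero]

theorem par_pred (s : ℕ) : s * (s - 1) % 2 = 0 := by
  cases s with
  | zero => rfl
  | succ u =>
    have h : Even ((u + 1) * u) := by rw [mul_comm]; exact Nat.even_mul_succ_self u
    rw [Nat.add_sub_cancel]
    exact Nat.even_iff.mp h

theorem arith_final (n k : ℕ) (hn : 1 ≤ n) (hk1 : 1 ≤ k) (hk2 : k ≤ n) :
    ((n - k) * (n - k - 1) / 2 + (n - k)) + ((n - 1) - k) * (n - 1)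
        + ((n - 1) * (n - 1 - 1) / 2 + (if k < n then n - 1 else 0))
      = (n - k) * (n - k + 1) / 2 + (n - k) * (n - 1) + (n - 2) * (n - 1) / 2 := by
  obtain ⟨m, rfl⟩ : ∃ m, n = k + m := ⟨n - k, by omega⟩
  cases m with
  | zero =>
    rw [if_neg (by omega)]
    simp only [Nat.add_zero, Nat.sub_self]
    have h1 : k - 1 - 1 = k - 2 := by omega
    have h2 : (k - 1) * (k - 2) = (k - 2) * (k - 1) := mul_comm _ _
    have h3 : (k - 1) - k = 0 := by omega
    rw [h1, h2, h3]
  | succ t =>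
    rw [if_pos (by omega)]
    have r1 : k + (t + 1) - k = t + 1 := by omega
    have r2 : k + (t + 1) - k - 1 = t := by omega
    have r3 : k + (t + 1) - 1 = k + t := by omega
    have r4 : k + t - k = t := by omega
    have r5 : k + (t + 1) - 2 = k + t - 1 := by omega
    have r6 : t + 1 - 1 = t := by omega
    simp only [r1, r2, r3, r4, r5, r6, Nat.add_sub_cancel]
    have r7 : k + t - 1 + 1 = k + t ∨ k + t = 0 := by omega
    have e1 : (t + 1) * (t + 1 + 1) = (t + 1) * t + 2 * (t + 1) := by ring
    have e2 : (t + 1) * t % 2 = 0 := by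
      have := par_pred (t + 1); rwa [Nat.add_sub_cancel] at this
    have e3 : (k + t) * (k + t - 1) % 2 = 0 := par_pred (k + t)
    have e4 : (k + t - 1) * (k + t) = (k + t) * (k + t - 1) := mul_comm _ _
    have e5 : (t + 1) * (k + t) = t * (k + t) + (k + t) := by ring
    have e6 : k + t - 1 - 1 = k + t - 2 := by omega
    omega

theorem finsum2 (n : ℕ) (g : ℕ → ℕ → ℕ) :
    (∑ i : Fin n, ∑ j : Fin n, g ↑i ↑j) = ∑ i ∈ Finset.range n, ∑ j ∈ Finset.range n, g i j := by
  calc (∑ i : Fin n, ∑ j : Fin n, g ↑i ↑j)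
      = ∑ i : Fin n, (fun x => ∑ j ∈ Finset.range n, g x j) ↑i := by
        apply Finset.sum_congr rfl
        intro i _
        exact Fin.sum_univ_eq_sum_range (g ↑i) n
    _ = _ := Fin.sum_univ_eq_sum_range (fun x => ∑ j ∈ Finset.range n, g x j) n

theorem card_FT (n k : ℕ) (hn : 1 ≤ n) (hk1 : 1 ≤ k) (hk2 : k ≤ n) :
    Fintype.card (FT n k)
      = (n - k) * (n - k + 1) / 2 + (n - k) * (n - 1) + (n - 2) * (n - 1) / 2 := by
  have hsplit : Fintype.card (FT n k) =
      ((∑ i : Fin n, ∑ j : Fin n, if k ≤ (i:ℕ) ∧ (i:ℕ) ≤ (j:ℕ) then (1:ℕ) else 0)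
      + (∑ i : Fin n, ∑ j : Fin n, if k ≤ (i:ℕ) ∧ (i:ℕ) < n - 1 ∧ (j:ℕ) < n - 1 then (1:ℕ) else 0))
      + (∑ i : Fin n, ∑ j : Fin n,
          if (i:ℕ) ≤ (j:ℕ) ∧ (j:ℕ) < n - 1 ∧ ((i:ℕ) = (j:ℕ) → k < n) then (1:ℕ) else 0) := by
    rw [Fintype.card_subtype, Finset.card_filter, Fintype.sum_prod_type]
    simp only [Fintype.sum_sum_type, Free, Fin.le_def]
    simp [Finset.sum_add_distrib]
  rw [hsplit,
    finsum2 n (fun a b => if k ≤ a ∧ a ≤ b then (1:ℕ) else 0),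
    finsum2 n (fun a b => if k ≤ a ∧ a < n - 1 ∧ b < n - 1 then (1:ℕ) else 0),
    finsum2 n (fun a b => if a ≤ b ∧ b < n - 1 ∧ (a = b → k < n) then (1:ℕ) else 0),
    count_hh, count_hv, count_vv]
  exact arith_final n k hn hk1 hk2

/-- for `1 ≤ k ≤ n` the subspace `g₂(P₁)_{e₁…e_k}` has dimension
`(n−k)(n−k+1)/2 + (n−k)(n−1) + (n−2)(n−1)/2`. -/
theorem dim_g2P1e (n k : ℕ) (hn : 1 ≤ n) (hk1 : 1 ≤ k) (hk2 : k ≤ n) :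
    Module.finrank ℝ (g2P1e n k) =
      (n - k) * (n - k + 1) / 2 + (n - k) * (n - 1) + (n - 2) * (n - 1) / 2 := by
  rw [finrank_eq_card n k (by omega) hk2, card_FT n k hn hk1 hk2]
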